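/- Let E be a real inner product space, C ⊆ E convex compact with 0 ∈ C, and f : C → C 1-Lipschitz. For λ ∈ (0,1), let y_λ be the unique point of C with λ f(y_λ) = y_λ. If 0 is not a fixed point of f, then for all 0 < λ < λ' < 1, ‖y_λ‖ < ‖y_{λ'}‖; i.e., λ ↦ ‖y_λ‖ is strictly increasing. -/

import Mathlib

open Set

theorem norm_ylam_strictMono
    {E : Type*} [NormedAddCommGroup E] [InnerProductSpace ℝ E]
    (C : Set E) (hC : Convex ℝ C) (hCcpt : IsCompact C) (h0 : (0:E) ∈ C)
    (f : E → E) (hf : MapsTo f C C) (hlip : LipschitzOnWith 1 f C)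
    (hf0 : f 0 ≠ 0)
    (y : ℝ → E) (hy : ∀ l ∈ Ioo (0:ℝ) 1, y l ∈ C ∧ l • f (y l) = y l) :
    ∀ l l' : ℝ, 0 < l → l < l' → l' < 1 → ‖y l‖ < ‖y l'‖ := by
  intro l l' hl hll' hl'
  have hl'0 : (0:ℝ) < l' := hl.trans hll'
  obtain ⟨hul, hfixl⟩ := hy l ⟨hl, hll'.trans hl'⟩
  obtain ⟨hvl, hfixl'⟩ := hy l' ⟨hl'0, hl'⟩
  set u := y l with hu
  set v := y l' with hv
  -- u, v nonzero
  have hu0 : u ≠ 0 := by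
    intro h
    apply hf0
    rw [h] at hfixl
    exact (smul_eq_zero.mp hfixl).resolve_left (ne_of_gt hl)
  have hv0 : v ≠ 0 := by
    intro h
    apply hf0
    rw [h] at hfixl'
    exact (smul_eq_zero.mp hfixl').resolve_left (ne_of_gt hl'0)
  have hdist : ‖f u - f v‖ ≤ ‖u - v‖ := by
    have := hlip.dist_le_mul u hul v hvl
    simpa [dist_eq_norm] using this
  have heq : l' • u - l • v = (l * l') • (f u - f v) := by
    calc l' • u - l • v = l' • (l • f u) - l • (l' • f v) := by rw [hfixl, hfixl']
    _ = (l * l') • f u - (l * l') • f v := by rw [smul_smul, smul_smul, mul_comm l' l]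
    _ = (l * l') • (f u - f v) := (smul_sub _ _ _).symm
  have hnorm : ‖l' • u - l • v‖ ≤ (l * l') * ‖u - v‖ := by
    rw [heq, norm_smul, Real.norm_eq_abs, abs_of_pos (mul_pos hl hl'0)]
    exact mul_le_mul_of_nonneg_left hdist (le_of_lt (mul_pos hl hl'0))
  have hsq : ‖l' • u - l • v‖ ^ 2 ≤ ((l * l') * ‖u - v‖) ^ 2 :=
    pow_le_pow_left₀ (norm_nonneg _) hnorm 2
  have e1 : ‖l' • u - l • v‖ ^ 2
      = l' ^ 2 * ‖u‖ ^ 2 - 2 * (l * l' * (inner ℝ u v : ℝ)) + l ^ 2 * ‖v‖ ^ 2 := by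
    rw [norm_sub_sq_real, real_inner_smul_left, real_inner_smul_right,
      norm_smul, norm_smul, Real.norm_eq_abs, Real.norm_eq_abs,
      abs_of_pos hl, abs_of_pos hl'0]
    ring
  have e2 : ((l * l') * ‖u - v‖) ^ 2
      = (l * l') ^ 2 * (‖u‖ ^ 2 - 2 * (inner ℝ u v : ℝ) + ‖v‖ ^ 2) := by
    rw [mul_pow, norm_sub_sq_real]
  rw [e1, e2] at hsq
  have hab : (inner ℝ u v : ℝ) ≤ ‖u‖ * ‖v‖ := real_inner_le_norm u v
  have ha : 0 < ‖u‖ := norm_pos_iff.mpr hu0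
  have hb : 0 < ‖v‖ := norm_pos_iff.mpr hv0
  by_contra h
  push_neg at h
  have hll1 : (0:ℝ) < 1 - l * l' := by nlinarith
  have step1 : 2 * (l * l') * (inner ℝ u v : ℝ) * (1 - l * l')
      ≤ 2 * (l * l') * (‖u‖ * ‖v‖) * (1 - l * l') := by
    have := mul_pos hl hl'0
    nlinarith [mul_le_mul_of_nonneg_left hab (le_of_lt (mul_pos this hll1))]
  have hA : 0 < ‖u‖ ^ 2 * l' - ‖v‖ ^ 2 * l := by
    have h2 : ‖v‖ ^ 2 ≤ ‖u‖ ^ 2 := pow_le_pow_left₀ hb.le h 2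
    nlinarith [mul_pos (mul_pos ha ha) (sub_pos.2 hll')]
  nlinarith [mul_nonneg (sq_nonneg (‖u‖ * l' - ‖v‖ * l)) hll1.le, step1,
    mul_pos (mul_pos (mul_pos hl hl'0) (sub_pos.2 hll')) hA]
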